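/- Let k ≥ 1 and let p : Fin k → ℝ satisfy p j > 0 for all j and ∑ j, p j = 1. Let Γ = diagonal p, Σ the matrix with entries Σ_{ij} = p i·(if i = j then 1 else 0) − p i·p j, and Ω = 1 − vecMulVec (√p) (√p) where (√p) j = Real.sqrt (p j). Then (i) Γ^{−1/2} * Σ * Γ^{−1/2} = Ω, where Γ^{−1/2} = diagonal (fun j => 1/Real.sqrt (p j)); (ii) Ω is idempotent: Ω * Ω = Ω; and (iii) trace Ω = k − 1. -/

import Mathlib

open Matrix

/-- For a positive probability vector `p` on `Fin k` (`k ≥ 1`), with `Γ = diagonal p`,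
`Σ i j = p i (if i = j then 1 else 0) − p i p j` and `Ω = 1 − √p √pᵀ`:
(i) `Γ^(−1/2) Σ Γ^(−1/2) = Ω`; (ii) `Ω` is idempotent; (iii) `trace Ω = k − 1`. -/
theorem stmt_10 {k : ℕ} (hk : 1 ≤ k) (p : Fin k → ℝ) (hp : ∀ j, 0 < p j)
    (hsum : ∑ j, p j = 1) :
    (Matrix.diagonal (fun j => 1 / Real.sqrt (p j))
        * (Matrix.of fun i j : Fin k => p i * (if i = j then 1 else 0) - p i * p j)
        * Matrix.diagonal (fun j => 1 / Real.sqrt (p j))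
      = (1 : Matrix (Fin k) (Fin k) ℝ)
          - Matrix.vecMulVec (fun j => Real.sqrt (p j)) (fun j => Real.sqrt (p j)))
    ∧ (((1 : Matrix (Fin k) (Fin k) ℝ)
          - Matrix.vecMulVec (fun j => Real.sqrt (p j)) (fun j => Real.sqrt (p j)))
        * ((1 : Matrix (Fin k) (Fin k) ℝ)
          - Matrix.vecMulVec (fun j => Real.sqrt (p j)) (fun j => Real.sqrt (p j)))
      = (1 : Matrix (Fin k) (Fin k) ℝ)
          - Matrix.vecMulVec (fun j => Real.sqrt (p j)) (fun j => Real.sqrt (p j)))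
    ∧ ((1 : Matrix (Fin k) (Fin k) ℝ)
          - Matrix.vecMulVec (fun j => Real.sqrt (p j)) (fun j => Real.sqrt (p j))).trace
      = (k : ℝ) - 1 := by
  have hs : ∀ j, Real.sqrt (p j) * Real.sqrt (p j) = p j := fun j =>
    Real.mul_self_sqrt (hp j).le
  have hsne : ∀ j, Real.sqrt (p j) ≠ 0 := fun j =>
    ne_of_gt (Real.sqrt_pos.2 (hp j))
  refine ⟨?_, ?_, ?_⟩
  · ext i j
    simp only [Matrix.mul_apply, Matrix.diagonal_apply, Matrix.sub_apply, Matrix.one_apply,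
      Matrix.vecMulVec_apply, Matrix.of_apply]
    rw [Finset.sum_eq_single j]
    · rw [Finset.sum_eq_single i]
      · have hi := hs i
        have hj := hs j
        have hi' := hsne i
        have hj' := hsne j
        set a := Real.sqrt (p i) with ha
        set b := Real.sqrt (p j) with hb
        by_cases h : i = j
        · subst h
          simp only [if_pos rfl, eq_self_iff_true, if_true]
          rw [← hi]
          field_simp
          ring
        · simp only [if_pos rfl, if_neg h, eq_self_iff_true, if_true]
          rw [← hi, ← hj]
          field_simp
          ring
      · intro b _ hb; simp [Ne.symm hb]
      · simp
    · intro b _ hb; simp [hb]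
    · simp
  · have key : Matrix.vecMulVec (fun j => Real.sqrt (p j)) (fun j => Real.sqrt (p j))
        * Matrix.vecMulVec (fun j => Real.sqrt (p j)) (fun j => Real.sqrt (p j))
        = Matrix.vecMulVec (fun j => Real.sqrt (p j)) (fun j => Real.sqrt (p j)) := by
      ext i j
      simp only [Matrix.mul_apply, Matrix.vecMulVec_apply]
      have : ∑ x, Real.sqrt (p i) * Real.sqrt (p x) * (Real.sqrt (p x) * Real.sqrt (p j))
          = Real.sqrt (p i) * Real.sqrt (p j) * ∑ x, p x := by
        rw [Finset.mul_sum]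
        refine Finset.sum_congr rfl fun x _ => ?_
        rw [show Real.sqrt (p i) * Real.sqrt (p x) * (Real.sqrt (p x) * Real.sqrt (p j))
            = Real.sqrt (p i) * Real.sqrt (p j) * (Real.sqrt (p x) * Real.sqrt (p x)) from by
          ring, hs x]
      rw [this, hsum, mul_one]
    rw [sub_mul, one_mul, mul_sub, mul_one, key]
    abel
  · rw [Matrix.trace_sub, Matrix.trace_one]
    have hv : (Matrix.vecMulVec (fun j => Real.sqrt (p j))
        (fun j => Real.sqrt (p j))).trace = 1 := by
      rw [Matrix.trace]
      calc ∑ x, (Matrix.vecMulVec (fun j => Real.sqrt (p j))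
            (fun j => Real.sqrt (p j))).diag x
          = ∑ x, p x := Finset.sum_congr rfl fun x _ => by
            simp [Matrix.diag, Matrix.vecMulVec_apply, hs x]
        _ = 1 := hsum
    rw [hv]
    simp
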